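/- Existence representer theorem: If all loss functions V_{x_j}(y_j, ·) are bounded from below and continuous (j = 1,…,l), all Hilbert spaces W_{x_1},…,W_{x_{l+u}} are finite dimensional, γ_A > 0, γ_I ≥ 0, and M is positive semidefinite, then the functional I(f) = (1/l) Σ_j V_{x_j}(y_j, C_{x_j} f(x_j)) + γ_A‖f‖²_{H_K} + γ_I⟨f̄, M f̄⟩ attains its infimum over H_K, and every minimiser lies in the span of the kernel sections: f_{z,γ} = Σ_{j=1}^{l+u} K_{x_j} a_j with a_j ∈ W_{x_j}. -/

import Mathlib

open scoped RealInnerProductSpace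

variable {l u : ℕ}

/-- The regularised learning functional
`I(f) = (1/l) Σ_j V_j(y_j, C_j f(x_j)) + γ_A ‖f‖² + γ_I ⟨f̄, M f̄⟩`, where the
evaluation at the input point `x_i` is `f(x_i) = K_{x_i}* f` and
`f̄ = (f(x_1),…,f(x_{l+u}))`. -/
noncomputable def lossI {HK : Type} [NormedAddCommGroup HK] [InnerProductSpace ℝ HK]
    [CompleteSpace HK]
    (Wb : Fin (l + u) → Type) [∀ i, NormedAddCommGroup (Wb i)]
    [∀ i, InnerProductSpace ℝ (Wb i)] [∀ i, CompleteSpace (Wb i)]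
    (Yb : Fin l → Type) [∀ j, NormedAddCommGroup (Yb j)] [∀ j, InnerProductSpace ℝ (Yb j)]
    (Kx : ∀ i, Wb i →L[ℝ] HK)
    (C : ∀ j : Fin l, Wb (Fin.castAdd u j) →L[ℝ] Yb j)
    (y : ∀ j : Fin l, Yb j)
    (V : ∀ j : Fin l, Yb j → Yb j → ℝ)
    (M : PiLp 2 Wb →L[ℝ] PiLp 2 Wb)
    (γA γI : ℝ) (f : HK) : ℝ :=
  (1 / (l : ℝ)) * ∑ j : Fin l, V j (y j) (C j ((Kx (Fin.castAdd u j)).adjoint f))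
    + γA * ‖f‖ ^ 2
    + γI * ⟪(WithLp.equiv 2 (∀ i, Wb i)).symm (fun i => (Kx i).adjoint f),
        M ((WithLp.equiv 2 (∀ i, Wb i)).symm (fun i => (Kx i).adjoint f))⟫


/-- Existence representer theorem: if the loss functions are bounded below and
continuous and all the spaces `W_{x_i}` are finite dimensional, then the regularised
learning functional attains its infimum, and every minimiser is a linear combination of
kernel sections. -/
theorem representer_existence {HK : Type} [NormedAddCommGroup HK]
    [InnerProductSpace ℝ HK] [CompleteSpace HK]
    (Wb : Fin (l + u) → Type) [∀ i, NormedAddCommGroup (Wb i)]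
    [∀ i, InnerProductSpace ℝ (Wb i)] [∀ i, CompleteSpace (Wb i)]
    [∀ i, FiniteDimensional ℝ (Wb i)]
    (Yb : Fin l → Type) [∀ j, NormedAddCommGroup (Yb j)] [∀ j, InnerProductSpace ℝ (Yb j)]
    (Kx : ∀ i, Wb i →L[ℝ] HK)
    (C : ∀ j : Fin l, Wb (Fin.castAdd u j) →L[ℝ] Yb j)
    (y : ∀ j : Fin l, Yb j)
    (V : ∀ j : Fin l, Yb j → Yb j → ℝ)
    (hVbdd : ∀ j : Fin l, ∃ b : ℝ, ∀ t : Yb j, b ≤ V j (y j) t)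
    (hVcont : ∀ j : Fin l, Continuous (V j (y j)))
    (M : PiLp 2 Wb →L[ℝ] PiLp 2 Wb)
    (hM : ∀ v w : PiLp 2 Wb, ⟪M v, w⟫ = ⟪v, M w⟫) (hMpos : ∀ w : PiLp 2 Wb, 0 ≤ ⟪w, M w⟫)
    (γA γI : ℝ) (hγA : 0 < γA) (hγI : 0 ≤ γI) :
    (∃ f₀ : HK, ∀ g : HK, lossI Wb Yb Kx C y V M γA γI f₀ ≤ lossI Wb Yb Kx C y V M γA γI g) ∧
      ∀ f₀ : HK, (∀ g : HK, lossI Wb Yb Kx C y V M γA γI f₀ ≤ lossI Wb Yb Kx C y V M γA γI g) →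
        ∃ a : ∀ i, Wb i, f₀ = ∑ i, Kx i (a i) := by
  classical
  set T : (∀ i, Wb i) →ₗ[ℝ] HK :=
    ∑ i, ((Kx i).toLinearMap.comp (LinearMap.proj i)) with hT
  have hTapp : ∀ a : ∀ i, Wb i, T a = ∑ i, Kx i (a i) := by
    intro a; simp [hT, LinearMap.sum_apply]
  set S : Submodule ℝ HK := LinearMap.range T with hS
  haveI : FiniteDimensional ℝ S := by
    exact Module.Finite.range T
  have hKxmem : ∀ i (w : Wb i), Kx i w ∈ S := by
    intro i w
    refine ⟨Pi.single i w, ?_⟩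
    rw [hTapp]
    rw [Finset.sum_eq_single i]
    · simp
    · intro j _ hj; simp [Pi.single_eq_of_ne hj]
    · simp
  -- adjoint kills the orthogonal complement part
  have hadj : ∀ f : HK, ∀ i, (Kx i).adjoint (f - ↑(Submodule.orthogonalProjectionOnto S f)) = 0 := by
    intro f i
    set q : HK := f - ↑(Submodule.orthogonalProjectionOnto S f) with hq
    have hqo : q ∈ Sᗮ := Submodule.sub_starProjection_mem_orthogonal (K := S) f
    have h0 : ⟪(Kx i).adjoint q, (Kx i).adjoint q⟫ = 0 := by
      rw [ContinuousLinearMap.adjoint_inner_left]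
      rw [real_inner_comm]
      exact (Submodule.mem_orthogonal S q).mp hqo _ (hKxmem i _)
    exact inner_self_eq_zero.mp h0
  set L := lossI Wb Yb Kx C y V M γA γI with hL
  -- key decomposition
  have key : ∀ f : HK,
      L f = L (↑(Submodule.orthogonalProjectionOnto S f)) + γA * ‖f - ↑(Submodule.orthogonalProjectionOnto S f)‖ ^ 2 := by
    intro f
    set p : HK := ↑(Submodule.orthogonalProjectionOnto S f) with hp
    have hadjf : ∀ i, (Kx i).adjoint f = (Kx i).adjoint p := by
      intro i
      have h := hadj f i
      rw [map_sub, sub_eq_zero] at h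
      exact h
    have hpq : ⟪p, f - p⟫ = 0 := by
      exact (Submodule.mem_orthogonal S (f - p)).mp
        (Submodule.sub_starProjection_mem_orthogonal (K := S) f) p (Submodule.orthogonalProjectionOnto S f).2
    have hnorm : ‖f‖ ^ 2 = ‖p‖ ^ 2 + ‖f - p‖ ^ 2 := by
      have h := norm_add_sq_real p (f - p)
      rw [show p + (f - p) = f by abel, hpq] at h
      linarith
    simp only [hL, lossI, hadjf]
    rw [hnorm]
    ring
  -- lower bound (coercivity)
  choose b hb using hVbdd
  set c : ℝ := (1 / (l : ℝ)) * ∑ j, b j with hc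
  have hlow : ∀ g : HK, c + γA * ‖g‖ ^ 2 ≤ L g := by
    intro g
    have h1 : (1 / (l : ℝ)) * ∑ j, b j
        ≤ (1 / (l : ℝ)) * ∑ j : Fin l, V j (y j) (C j ((Kx (Fin.castAdd u j)).adjoint g)) := by
      apply mul_le_mul_of_nonneg_left _ (by positivity)
      exact Finset.sum_le_sum fun j _ => hb j _
    have h2 : 0 ≤ γI * ⟪(WithLp.equiv 2 (∀ i, Wb i)).symm (fun i => (Kx i).adjoint g),
        M ((WithLp.equiv 2 (∀ i, Wb i)).symm (fun i => (Kx i).adjoint g))⟫ :=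
      mul_nonneg hγI (hMpos _)
    simp only [hL, lossI]
    linarith
  -- continuity of L
  have hcont : Continuous L := by
    have hΦ : Continuous fun f : HK =>
        (WithLp.equiv 2 (∀ i, Wb i)).symm (fun i => (Kx i).adjoint f) := by
      exact ((PiLp.continuousLinearEquiv 2 ℝ Wb).symm.continuous).comp
        (continuous_pi fun i => ((Kx i).adjoint).continuous)
    have h1 : Continuous fun f : HK =>
        (1 / (l : ℝ)) * ∑ j : Fin l, V j (y j) (C j ((Kx (Fin.castAdd u j)).adjoint f)) := by
      apply continuous_const.mul
      apply continuous_finset_sum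
      intro j _
      exact (hVcont j).comp ((C j).continuous.comp ((Kx (Fin.castAdd u j)).adjoint).continuous)
    have h2 : Continuous fun f : HK => γA * ‖f‖ ^ 2 :=
      continuous_const.mul (continuous_norm.pow 2)
    have h3 : Continuous fun f : HK =>
        γI * ⟪(WithLp.equiv 2 (∀ i, Wb i)).symm (fun i => (Kx i).adjoint f),
          M ((WithLp.equiv 2 (∀ i, Wb i)).symm (fun i => (Kx i).adjoint f))⟫ :=
      continuous_const.mul (hΦ.inner (M.continuous.comp hΦ))
    simp only [hL, lossI]
    exact (h1.add h2).add h3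
  -- the compact ball in S
  set R : ℝ := Real.sqrt ((L 0 - c) / γA) with hR
  have hRnn : 0 ≤ R := Real.sqrt_nonneg _
  set Kset : Set HK := Subtype.val '' (Metric.closedBall (0 : S) R) with hKset
  have hKc : IsCompact Kset :=
    (isCompact_closedBall (0 : S) R).image continuous_subtype_val
  have h0mem : (0 : HK) ∈ Kset := ⟨0, by simpa using hRnn, rfl⟩
  obtain ⟨f₀, hf₀mem, hf₀⟩ := hKc.exists_isMinOn ⟨0, h0mem⟩ hcont.continuousOn
  -- if L g ≤ L 0 and g ∈ S then g ∈ Kset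
  have hball : ∀ g : S, L ↑g ≤ L 0 → (↑g : HK) ∈ Kset := by
    intro g hg
    refine ⟨g, ?_, rfl⟩
    rw [Metric.mem_closedBall, dist_zero_right]
    rw [hR]
    rw [show ‖g‖ = Real.sqrt (‖g‖ ^ 2) by rw [Real.sqrt_sq (norm_nonneg g)]]
    apply Real.sqrt_le_sqrt
    rw [le_div_iff₀ hγA]
    have := hlow ↑g
    have hng : ‖(↑g : HK)‖ = ‖g‖ := rfl
    rw [hng] at this
    linarith
  have hglobal : ∀ g : HK, L f₀ ≤ L g := by
    intro g
    set p : HK := ↑(Submodule.orthogonalProjectionOnto S g) with hp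
    have hLp : L p ≤ L g := by
      have := key g
      have h2 : 0 ≤ γA * ‖g - p‖ ^ 2 := mul_nonneg hγA.le (sq_nonneg _)
      linarith
    by_cases hcase : L p ≤ L 0
    · exact le_trans (hf₀ (hball (Submodule.orthogonalProjectionOnto S g) hcase)) hLp
    · push_neg at hcase
      exact le_trans (hf₀ h0mem) (le_trans hcase.le hLp)
  refine ⟨⟨f₀, hglobal⟩, ?_⟩
  intro g₀ hmin
  set p : HK := ↑(Submodule.orthogonalProjectionOnto S g₀) with hp
  have hkey := key g₀
  have hle := hmin p
  have hz : γA * ‖g₀ - p‖ ^ 2 = 0 :=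
    le_antisymm (by linarith) (mul_nonneg hγA.le (sq_nonneg _))
  have hzz : g₀ = p := by
    have h1 : ‖g₀ - p‖ ^ 2 = 0 := by
      rcases mul_eq_zero.mp hz with h | h
      · exact absurd h hγA.ne'
      · exact h
    have : ‖g₀ - p‖ = 0 := by
      have := sq_eq_zero_iff.mp h1
      exact this
    rwa [norm_eq_zero, sub_eq_zero] at this
  obtain ⟨a, ha⟩ := (Submodule.orthogonalProjectionOnto S g₀).2
  exact ⟨a, by rw [hzz, ← hTapp, ha]⟩
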